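/- For all positive integers n and d, the matrix V̂(n,d) with entry at position (α,β) given by (d choose β) · Π_k α_k^{β_k} (multinomial coefficient d!/(β_1!···β_n!), convention 0^0=1), indexed by α, β ∈ B(n,d), is nonsingular; moreover det V̂(n,d) = (Π_{β ∈ B(n,d)} d!/(β_1!···β_n!)) · det V(n,d). -/

import Mathlib

/-- The index set `B(n,d)`: vectors in `ℕ^n` with entries summing to `d`. -/
abbrev Bnd (n d : ℕ) := {α : Fin n → ℕ // α ∈ Finset.Nat.antidiagonalTuple n d}

/-- The power-product matrix `V(n,d)` with entry `(α)^β = ∏ k, α k ^ β k`. -/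
noncomputable def powerProductMatrix (n d : ℕ) : Matrix (Bnd n d) (Bnd n d) ℝ :=
  Matrix.of fun α β => ∏ k, ((α : Fin n → ℕ) k : ℝ) ^ ((β : Fin n → ℕ) k)

/-- The matrix `V̂(n,d)` with entry `(d choose β) ∏ k, α k ^ β k`, where
`(d choose β) = d!/(β₁!⋯βₙ!)` is the multinomial coefficient. -/
noncomputable def powerProductMatrixHat (n d : ℕ) : Matrix (Bnd n d) (Bnd n d) ℝ :=
  Matrix.of fun α β =>
    (Nat.multinomial Finset.univ (β : Fin n → ℕ) : ℝ) *
      ∏ k, ((α : Fin n → ℕ) k : ℝ) ^ ((β : Fin n → ℕ) k)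

namespace Stmt10Aux

variable {n d : ℕ}

/-- Column functions of `V(n,d)`. -/
def fcol (n d : ℕ) (β : Fin n → ℕ) : Bnd n d → ℝ :=
  fun α => ∏ k, ((α : Fin n → ℕ) k : ℝ) ^ β k

noncomputable def Vspan (n d : ℕ) : Submodule ℝ (Bnd n d → ℝ) :=
  Submodule.span ℝ (Set.range fun b : Bnd n d => fcol n d (b : Fin n → ℕ))

lemma sum_coords (α : Bnd n d) : ∑ k, (α : Fin n → ℕ) k = d :=
  Finset.Nat.mem_antidiagonalTuple.mp α.2

lemma fcol_mem (hd : 0 < d) (β : Fin n → ℕ) (hβ : ∑ k, β k ≤ d) :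
    fcol n d β ∈ Vspan n d := by
  suffices H : ∀ m (β : Fin n → ℕ), d - ∑ k, β k = m → ∑ k, β k ≤ d →
      fcol n d β ∈ Vspan n d from H _ β rfl hβ
  intro m
  induction m with
  | zero =>
    intro β h0 hβ
    have hsum : ∑ k, β k = d := le_antisymm hβ (by omega)
    exact Submodule.subset_span ⟨⟨β, Finset.Nat.mem_antidiagonalTuple.mpr hsum⟩, rfl⟩
  | succ m ih =>
    intro β h0 hβ
    have hlt : ∑ k, β k < d := by omega
    have hstep : ∀ (k : Fin n) (α : Bnd n d),
        fcol n d (β + Pi.single k 1) α = ((α : Fin n → ℕ) k : ℝ) * fcol n d β α := by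
      intro k α
      unfold fcol
      have hsplit : ∀ j, ((α : Fin n → ℕ) j : ℝ) ^ ((β + Pi.single k 1 : Fin n → ℕ) j)
          = ((α : Fin n → ℕ) j : ℝ) ^ β j *
            ((α : Fin n → ℕ) j : ℝ) ^ (Pi.single k 1 : Fin n → ℕ) j := by
        intro j; rw [Pi.add_apply, pow_add]
      rw [Finset.prod_congr rfl fun j _ => hsplit j, Finset.prod_mul_distrib]
      have hone : ∏ j, ((α : Fin n → ℕ) j : ℝ) ^ (Pi.single k 1 : Fin n → ℕ) j
          = ((α : Fin n → ℕ) k : ℝ) := by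
        rw [Finset.prod_eq_single k (fun j _ hj => by rw [Pi.single_eq_of_ne hj, pow_zero])
          (fun h => absurd (Finset.mem_univ k) h), Pi.single_eq_same, pow_one]
      rw [hone, mul_comm]
    have key : fcol n d β = (d : ℝ)⁻¹ • ∑ k : Fin n, fcol n d (β + Pi.single k 1) := by
      funext α
      have hα : (∑ k, ((α : Fin n → ℕ) k : ℝ)) = (d : ℝ) := by
        exact_mod_cast congrArg (Nat.cast : ℕ → ℝ) (sum_coords α)
      simp only [Pi.smul_apply, Finset.sum_apply, smul_eq_mul]
      rw [Finset.sum_congr rfl (fun k _ => hstep k α), ← Finset.sum_mul, hα]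
      have hdne : (d : ℝ) ≠ 0 := by positivity
      field_simp
    rw [key]
    refine Submodule.smul_mem _ _ (Submodule.sum_mem _ fun k _ => ih _ ?_ ?_) <;>
    · have : ∑ j, (β + Pi.single k 1 : Fin n → ℕ) j = (∑ j, β j) + 1 := by
        simp [Finset.sum_add_distrib, Finset.sum_pi_single]
      omega

def delta (α : Bnd n d) : Bnd n d → ℝ := fun γ => if γ = α then 1 else 0

lemma single_mem (hd : 0 < d) (α : Bnd n d) : delta α ∈ Vspan n d := by
  set c : ℝ := ∏ k, (((α : Fin n → ℕ) k).factorial : ℝ) with hc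
  have hcne : c ≠ 0 := by
    refine Finset.prod_ne_zero_iff.mpr fun k _ => ?_
    exact_mod_cast (Nat.factorial_pos _).ne'
  set g : Bnd n d → ℝ := fun γ =>
    ∏ k, (descPochhammer ℝ ((α : Fin n → ℕ) k)).eval (((γ : Fin n → ℕ) k : ℝ)) with hgdef
  have hg : g = c • delta α := by
    funext γ
    have heval : ∀ k, (descPochhammer ℝ ((α : Fin n → ℕ) k)).eval (((γ : Fin n → ℕ) k : ℝ))
        = (Nat.descFactorial ((γ : Fin n → ℕ) k) ((α : Fin n → ℕ) k) : ℝ) :=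
      fun k => descPochhammer_eval_eq_descFactorial ℝ _ _
    by_cases hγ : γ = α
    · subst hγ
      simp only [hgdef, heval, Pi.smul_apply, delta, if_pos rfl, smul_eq_mul, mul_one, hc]
      push_cast [Nat.descFactorial_self]
      exact (mul_one _).symm
    · have : ∃ k, (γ : Fin n → ℕ) k < (α : Fin n → ℕ) k := by
        by_contra h
        push_neg at h
        have := (Finset.sum_eq_sum_iff_of_le (fun k _ => h k)).mp
          (by rw [sum_coords α, sum_coords γ])
        exact hγ (Subtype.ext (funext fun k => ((this k (Finset.mem_univ k)).symm)))
      obtain ⟨k, hk⟩ := this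
      have : g γ = 0 := by
        simp only [hgdef]
        apply Finset.prod_eq_zero (Finset.mem_univ k)
        rw [heval k, Nat.descFactorial_eq_zero_iff_lt.mpr hk, Nat.cast_zero]
      rw [this, Pi.smul_apply, delta, if_neg hγ, smul_zero]
  have hgmem : g ∈ Vspan n d := by
    have hexp : g =
        ∑ J ∈ Fintype.piFinset (fun k => Finset.range ((α : Fin n → ℕ) k + 1)),
          (∏ k, (descPochhammer ℝ ((α : Fin n → ℕ) k)).coeff (J k)) • fcol n d J := by
      funext γ
      simp only [hgdef, Finset.sum_apply, Pi.smul_apply, smul_eq_mul]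
      have : ∀ k, (descPochhammer ℝ ((α : Fin n → ℕ) k)).eval (((γ : Fin n → ℕ) k : ℝ))
          = ∑ j ∈ Finset.range ((α : Fin n → ℕ) k + 1),
              (descPochhammer ℝ ((α : Fin n → ℕ) k)).coeff j * ((γ : Fin n → ℕ) k : ℝ) ^ j := by
        intro k
        rw [Polynomial.eval_eq_sum_range' (n := (α : Fin n → ℕ) k + 1)]
        rw [descPochhammer_natDegree]
        omega
      rw [Finset.prod_congr rfl fun k _ => this k, Finset.prod_univ_sum]
      refine Finset.sum_congr rfl fun J _ => ?_
      rw [Finset.prod_mul_distrib]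
      rfl
    rw [hexp]
    refine Submodule.sum_mem _ fun J hJ => ?_
    have hJle : ∑ k, J k ≤ d := by
      rw [← sum_coords α]
      refine Finset.sum_le_sum fun k _ => ?_
      have := Fintype.mem_piFinset.mp hJ k
      simpa [Nat.lt_succ_iff] using this
    exact Submodule.smul_mem _ _ (fcol_mem hd J hJle)
  have : delta α = c⁻¹ • g := by
    rw [hg, smul_smul, inv_mul_cancel₀ hcne, one_smul]
  rw [this]
  exact Submodule.smul_mem _ _ hgmem

lemma Vspan_top (hd : 0 < d) : Vspan n d = ⊤ := by
  rw [eq_top_iff]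
  intro x _
  have hx : x = ∑ α : Bnd n d, x α • delta α := by
    funext γ
    simp [delta, Finset.sum_apply]
  rw [hx]
  exact Submodule.sum_mem _ fun α _ => Submodule.smul_mem _ _ (single_mem hd α)

lemma det_V_ne (hd : 0 < d) : (powerProductMatrix n d).det ≠ 0 := by
  intro h0
  obtain ⟨v, hvne, hv⟩ := (Matrix.exists_mulVec_eq_zero_iff).mpr h0
  -- toLin' is surjective, hence injective, contradiction
  set f := Matrix.toLin' (powerProductMatrix n d) with hf
  have hsurj : Function.Surjective f := by
    intro y
    have : y ∈ Vspan n d := by rw [Vspan_top hd]; trivial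
    obtain ⟨c, hcy⟩ := (Submodule.mem_span_range_iff_exists_fun ℝ).mp this
    refine ⟨c, ?_⟩
    rw [hf, Matrix.toLin'_apply, ← hcy]
    funext γ
    simp only [Matrix.mulVec, dotProduct, Finset.sum_apply, Pi.smul_apply, smul_eq_mul]
    exact Finset.sum_congr rfl fun b _ => by
      simp [powerProductMatrix, fcol, mul_comm]
  have hinj : Function.Injective f :=
    (LinearMap.injective_iff_surjective).mpr hsurj
  have : f v = f 0 := by
    rw [hf, Matrix.toLin'_apply, hv, map_zero]
  exact hvne (hinj this)

end Stmt10Aux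

theorem stmt10 (n d : ℕ) (hn : 0 < n) (hd : 0 < d) :
    (powerProductMatrixHat n d).det ≠ 0
    ∧ (powerProductMatrixHat n d).det
      = (∏ β ∈ Finset.Nat.antidiagonalTuple n d, (Nat.multinomial Finset.univ β : ℝ)) *
          (powerProductMatrix n d).det := by
  have hVhat : powerProductMatrixHat n d
      = powerProductMatrix n d *
        Matrix.diagonal (fun β : Bnd n d => (Nat.multinomial Finset.univ (β : Fin n → ℕ) : ℝ)) := by
    ext α β
    simp [powerProductMatrixHat, powerProductMatrix, Matrix.mul_diagonal, mul_comm]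
  have hprod : (∏ β : Bnd n d, (Nat.multinomial Finset.univ (β : Fin n → ℕ) : ℝ))
      = ∏ β ∈ Finset.Nat.antidiagonalTuple n d, (Nat.multinomial Finset.univ β : ℝ) :=
    Finset.prod_coe_sort (Finset.Nat.antidiagonalTuple n d)
      (fun β => (Nat.multinomial Finset.univ β : ℝ))
  have hdet : (powerProductMatrixHat n d).det
      = (∏ β ∈ Finset.Nat.antidiagonalTuple n d, (Nat.multinomial Finset.univ β : ℝ)) *
          (powerProductMatrix n d).det := by
    rw [hVhat, Matrix.det_mul, Matrix.det_diagonal, hprod, mul_comm]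
  refine ⟨?_, hdet⟩
  rw [hdet]
  refine mul_ne_zero ?_ (Stmt10Aux.det_V_ne hd)
  refine Finset.prod_ne_zero_iff.mpr fun β _ => ?_
  exact_mod_cast (Nat.multinomial_pos _ _).ne'
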